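/- Let g be a Lie algebra over a field K of characteristic zero and let p_1 = Σ_{n≥1} ((−1)^{n−1}/n) m^{(n)} ∘ (id − η∘ε)^{⊗n} ∘ Δ^{(n)} be the first Eulerian idempotent of U(g). Then under the symmetrization isomorphism Sym : S(g) → U(g), p_m corresponds to the projection onto the m-th symmetric component S^m(g). -/

import Mathlib

open TensorProduct

noncomputable section

variable (K : Type*) [Field K] [CharZero K]
variable (L : Type*) [LieRing L] [LieAlgebra K L]

local notation "UE" => UniversalEnvelopingAlgebra K L

/-- Convolution product on endomorphisms of `U(g)`. -/
def conv (Δ : UE →ₐ[K] UE ⊗[K] UE) (f g : UE →ₗ[K] UE) : UE →ₗ[K] UE :=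
  LinearMap.mul' K UE ∘ₗ TensorProduct.map f g ∘ₗ Δ.toLinearMap

/-- Convolution powers of `J = id − η∘ε`. -/
def convPowJ (Δ : UE →ₐ[K] UE ⊗[K] UE) (ε : UE →ₐ[K] K) : ℕ → (UE →ₗ[K] UE)
  | 0 => Algebra.linearMap K UE ∘ₗ ε.toLinearMap
  | n + 1 => conv K L Δ (LinearMap.id - Algebra.linearMap K UE ∘ₗ ε.toLinearMap)
      (convPowJ Δ ε n)

/-- The symmetrization `Sym(x₁ ⊗ ⋯ ⊗ x_m) = (1/m!) Σ_σ ι(x_{σ(1)}) ⋯ ι(x_{σ(m)}) ∈ U(g)`. -/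
def symProd (m : ℕ) (x : Fin m → L) : UE :=
  ((m.factorial : K)⁻¹) • ∑ σ : Equiv.Perm (Fin m),
    (List.ofFn fun i => UniversalEnvelopingAlgebra.ι K (x (σ i))).prod


section scalarAux
open PowerSeries Finset

noncomputable def eulE : PowerSeries ℚ := PowerSeries.exp ℚ - 1

noncomputable def eulC (k m : ℕ) : ℚ :=
  (m.factorial : ℚ) * PowerSeries.coeff m (eulE ^ k)

lemma coeff_eulE (j : ℕ) :
    PowerSeries.coeff j eulE = if j = 0 then 0 else ((j.factorial : ℚ))⁻¹ := by
  simp only [eulE, map_sub, PowerSeries.coeff_exp, PowerSeries.coeff_one]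
  split <;> simp_all

lemma constantCoeff_eulE : PowerSeries.constantCoeff eulE = 0 := by
  have := coeff_eulE 0
  simpa [PowerSeries.coeff_zero_eq_constantCoeff] using this

lemma eulC_zero (m : ℕ) : eulC 0 m = if m = 0 then 1 else 0 := by
  simp [eulC, PowerSeries.coeff_one]
  split <;> simp_all [Nat.factorial]

lemma coeff_eulE_pow_eq_zero {k m : ℕ} (h : m < k) :
    PowerSeries.coeff m (eulE ^ k) = 0 := by
  induction k generalizing m with
  | zero => omega
  | succ k ih =>
    rw [pow_succ, mul_comm, PowerSeries.coeff_mul]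
    apply Finset.sum_eq_zero
    rintro ⟨i, j⟩ hij
    replace hij : i + j = m := by simpa using hij
    rcases Nat.eq_zero_or_pos i with hi | hi
    · subst hi
      simp [coeff_eulE]
    · have : j < k := by omega
      simp [ih this]

lemma eulC_eq_zero {k m : ℕ} (h : m < k) : eulC k m = 0 := by
  simp [eulC, coeff_eulE_pow_eq_zero h]

lemma eulC_succ (k m : ℕ) :
    eulC (k + 1) m = ∑ j ∈ Finset.range (m + 1),
      if j = 0 then 0 else (m.choose j : ℚ) * eulC k (m - j) := by
  rw [eulC, pow_succ, mul_comm (eulE ^ k), PowerSeries.coeff_mul,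
    Finset.Nat.sum_antidiagonal_eq_sum_range_succ_mk, Finset.mul_sum]
  refine Finset.sum_congr rfl fun j hj => ?_
  simp only [Finset.mem_range] at hj
  have hjm : j ≤ m := by omega
  rw [coeff_eulE]
  split
  · simp
  · rw [eulC, Nat.cast_choose ℚ hjm]
    have h1 : (j.factorial : ℚ) ≠ 0 := Nat.cast_ne_zero.2 (Nat.factorial_ne_zero _)
    have h2 : ((m - j).factorial : ℚ) ≠ 0 := Nat.cast_ne_zero.2 (Nat.factorial_ne_zero _)
    field_simp

lemma derivative_eulE : d⁄dX ℚ eulE = 1 + eulE := by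
  ext n
  rw [PowerSeries.coeff_derivative]
  simp only [map_add, coeff_eulE, PowerSeries.coeff_one]
  rw [if_neg (Nat.succ_ne_zero n)]
  rcases Nat.eq_zero_or_pos n with h | h
  · subst h; simp [Nat.factorial]
  · rw [if_neg (by omega), if_neg (by omega)]
    rw [Nat.factorial_succ]
    have h1 : (n.factorial : ℚ) ≠ 0 := Nat.cast_ne_zero.2 (Nat.factorial_ne_zero _)
    field_simp
    push_cast; ring

-- R2 : Stirling-type recurrence
lemma eulC_rec (k m : ℕ) :
    eulC (k + 1) (m + 1) = (k + 1 : ℚ) * (eulC (k + 1) m + eulC k m) := by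
  have hd : d⁄dX ℚ (eulE ^ (k + 1)) = (k + 1 : ℕ) • (eulE ^ k * d⁄dX ℚ eulE) := by
    rw [Derivation.leibniz_pow]
    simp [smul_smul]
  have := congrArg (PowerSeries.coeff m) hd
  rw [PowerSeries.coeff_derivative] at this
  rw [derivative_eulE] at this
  have h2 : eulE ^ k * (1 + eulE) = eulE ^ k + eulE ^ (k + 1) := by ring
  rw [h2] at this
  rw [map_nsmul, map_add] at this
  simp only [nsmul_eq_mul, Nat.cast_add, Nat.cast_one] at this
  simp only [eulC, Nat.factorial_succ, Nat.cast_mul, Nat.cast_add, Nat.cast_one]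
  linear_combination (m.factorial : ℚ) * this

section Lam

lemma lam_zero (Lser : PowerSeries ℚ) (lam : ℕ → ℕ → ℚ)
    (hlam : ∀ m n : ℕ, lam m n = PowerSeries.coeff n ((m.factorial : ℚ)⁻¹ • Lser ^ m))
    (k : ℕ) : lam 0 k = if k = 0 then 1 else 0 := by
  rw [hlam]
  simp [PowerSeries.coeff_one]

lemma lam_zero' (Lser : PowerSeries ℚ) (lam : ℕ → ℕ → ℚ)
    (hL : ∀ n : ℕ, PowerSeries.coeff n Lser =
      if n = 0 then 0 else (-1 : ℚ) ^ (n - 1) / (n : ℚ))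
    (hlam : ∀ m n : ℕ, lam m n = PowerSeries.coeff n ((m.factorial : ℚ)⁻¹ • Lser ^ m))
    (m' : ℕ) : lam m' 0 = if m' = 0 then 1 else 0 := by
  rcases Nat.eq_zero_or_pos m' with h | h
  · subst h; exact lam_zero Lser lam hlam 0
  · rw [hlam, if_neg (by omega)]
    rw [map_smul, smul_eq_mul]
    have : PowerSeries.coeff 0 (Lser ^ m') = 0 := by
      rw [PowerSeries.coeff_zero_eq_constantCoeff, map_pow]
      have h0 : PowerSeries.constantCoeff Lser = 0 := by
        have := hL 0
        simpa [PowerSeries.coeff_zero_eq_constantCoeff] using this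
      rw [h0, zero_pow (by omega)]
    rw [this, mul_zero]

lemma hstep (Lser : PowerSeries ℚ)
    (hL : ∀ n : ℕ, PowerSeries.coeff n Lser =
      if n = 0 then 0 else (-1 : ℚ) ^ (n - 1) / (n : ℚ)) :
    (1 + PowerSeries.X) * d⁄dX ℚ Lser = 1 := by
  ext n
  rw [add_mul, one_mul, map_add]
  cases n with
  | zero =>
    rw [PowerSeries.coeff_zero_X_mul, add_zero, PowerSeries.coeff_derivative, hL]
    simp
  | succ n =>
    rw [PowerSeries.coeff_succ_X_mul, PowerSeries.coeff_derivative,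
      PowerSeries.coeff_derivative, hL, hL, PowerSeries.coeff_one,
      if_neg (Nat.succ_ne_zero n), if_neg (Nat.succ_ne_zero (n+1)), if_neg (Nat.succ_ne_zero n)]
    have h1 : ((n:ℚ) + 1) ≠ 0 := by positivity
    have h2 : ((n:ℚ) + 1 + 1) ≠ 0 := by positivity
    simp only [Nat.succ_sub_one, Nat.cast_add, Nat.cast_one]
    field_simp
    ring

lemma lamR1 (Lser : PowerSeries ℚ) (lam : ℕ → ℕ → ℚ)
    (hL : ∀ n : ℕ, PowerSeries.coeff n Lser =
      if n = 0 then 0 else (-1 : ℚ) ^ (n - 1) / (n : ℚ))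
    (hlam : ∀ m n : ℕ, lam m n = PowerSeries.coeff n ((m.factorial : ℚ)⁻¹ • Lser ^ m))
    (m' k : ℕ) :
    (k + 1 : ℚ) * lam (m' + 1) (k + 1) + (k : ℚ) * lam (m' + 1) k = lam m' k := by
  have hpow : (1 + PowerSeries.X) * d⁄dX ℚ (Lser ^ (m' + 1)) =
      ((m' + 1 : ℕ) : ℚ⟦X⟧) * Lser ^ m' := by
    rw [Derivation.leibniz_pow]
    have : (m' + 1) • (Lser ^ m' • d⁄dX ℚ Lser) = ((m' + 1 : ℕ) : ℚ⟦X⟧) *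
        (Lser ^ m' * d⁄dX ℚ Lser) := by
      simp [nsmul_eq_mul, smul_eq_mul]
    rw [Nat.add_sub_cancel, this]
    rw [show (1 + PowerSeries.X) * (((m' + 1 : ℕ) : ℚ⟦X⟧) * (Lser ^ m' * d⁄dX ℚ Lser)) =
      ((m' + 1 : ℕ) : ℚ⟦X⟧) * (Lser ^ m') * ((1 + PowerSeries.X) * d⁄dX ℚ Lser) by ring,
      hstep Lser hL, mul_one]
  have hc := congrArg (PowerSeries.coeff k) hpow
  rw [add_mul, one_mul, map_add] at hc
  have hXg : PowerSeries.coeff k (PowerSeries.X * d⁄dX ℚ (Lser ^ (m' + 1))) =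
      (k : ℚ) * PowerSeries.coeff k (Lser ^ (m' + 1)) := by
    cases k with
    | zero => simp [PowerSeries.coeff_zero_X_mul]
    | succ k =>
      rw [PowerSeries.coeff_succ_X_mul, PowerSeries.coeff_derivative]
      push_cast; ring
  rw [hXg, PowerSeries.coeff_derivative] at hc
  have hcast : PowerSeries.coeff k (((m' + 1 : ℕ) : ℚ⟦X⟧) * Lser ^ m') =
      ((m' + 1 : ℕ) : ℚ) * PowerSeries.coeff k (Lser ^ m') := by
    rw [show ((m' + 1 : ℕ) : ℚ⟦X⟧) = PowerSeries.C ((m' + 1 : ℕ) : ℚ) by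
      rw [map_natCast], PowerSeries.coeff_C_mul]
  rw [hcast] at hc
  rw [hlam, hlam, hlam, map_smul, map_smul, map_smul, smul_eq_mul, smul_eq_mul, smul_eq_mul]
  have hfac : ((m' + 1).factorial : ℚ) = ((m' + 1 : ℕ) : ℚ) * (m'.factorial : ℚ) := by
    rw [Nat.factorial_succ]; push_cast; ring
  have hf2 : ((m'.factorial : ℚ)) ≠ 0 := Nat.cast_ne_zero.2 (Nat.factorial_ne_zero _)
  have hm1 : ((m' + 1 : ℕ) : ℚ) ≠ 0 := by push_cast; positivity
  have hinv : (((m' + 1).factorial : ℚ))⁻¹ * ((m' + 1 : ℕ) : ℚ) = ((m'.factorial : ℚ))⁻¹ := by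
    rw [hfac, mul_inv]
    field_simp
  linear_combination (((m' + 1).factorial : ℚ))⁻¹ * hc
    + PowerSeries.coeff k (Lser ^ m') * hinv

end Lam

lemma keySum (Lser : PowerSeries ℚ) (lam : ℕ → ℕ → ℚ)
    (hL : ∀ n : ℕ, PowerSeries.coeff n Lser =
      if n = 0 then 0 else (-1 : ℚ) ^ (n - 1) / (n : ℚ))
    (hlam : ∀ m n : ℕ, lam m n = PowerSeries.coeff n ((m.factorial : ℚ)⁻¹ • Lser ^ m)) :
    ∀ m m' n : ℕ, m < n →
      (∑ k ∈ Finset.range n, lam m' k * eulC k m) = if m' = m then 1 else 0 := by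
  intro m
  induction m with
  | zero =>
    intro m' n hn
    rw [Finset.sum_eq_single 0]
    · rw [eulC_zero, if_pos rfl, mul_one, lam_zero' Lser lam hL hlam]
    · intro k _ hk
      rw [eulC_eq_zero (by omega), mul_zero]
    · intro h
      exact absurd (Finset.mem_range.2 (by omega)) h
  | succ m ih =>
    intro m' n hn
    obtain ⟨nn, rfl⟩ : ∃ nn, n = nn + 1 := ⟨n - 1, by omega⟩
    have hmnn : m < nn := by omega
    rw [Finset.sum_range_succ']
    have h0 : lam m' 0 * eulC 0 (m + 1) = 0 := by
      rw [eulC_zero, if_neg (Nat.succ_ne_zero m), mul_zero]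
    rw [h0, add_zero]
    cases m' with
    | zero =>
      rw [if_neg (by omega)]
      apply Finset.sum_eq_zero
      intro k _
      rw [lam_zero Lser lam hlam, if_neg (Nat.succ_ne_zero k), zero_mul]
    | succ mm =>
      have key : ∀ k, lam (mm + 1) (k + 1) * eulC (k + 1) (m + 1) =
          ((k + 1 : ℚ) * lam (mm + 1) (k + 1)) * eulC (k + 1) m
          + ((k + 1 : ℚ) * lam (mm + 1) (k + 1)) * eulC k m := by
        intro k
        rw [eulC_rec]
        push_cast
        ring
      rw [Finset.sum_congr rfl fun k _ => key k, Finset.sum_add_distrib]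
      -- shift the first sum
      have hshift : (∑ k ∈ Finset.range nn, ((k + 1 : ℚ) * lam (mm + 1) (k + 1)) * eulC (k + 1) m)
          = ∑ k ∈ Finset.range nn, ((k : ℚ) * lam (mm + 1) k) * eulC k m := by
        have := Finset.sum_range_succ' (fun k => ((k : ℚ) * lam (mm + 1) k) * eulC k m) nn
        rw [Finset.sum_range_succ] at this
        push_cast at this ⊢
        rw [eulC_eq_zero hmnn] at this
        simpa using this.symm
      rw [hshift, ← Finset.sum_add_distrib]
      have : ∀ k : ℕ, ((k : ℚ) * lam (mm + 1) k) * eulC k m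
            + ((k + 1 : ℚ) * lam (mm + 1) (k + 1)) * eulC k m = lam mm k * eulC k m := by
        intro k
        rw [← lamR1 Lser lam hL hlam mm k]
        ring
      rw [Finset.sum_congr rfl fun k _ => this k, ih mm nn hmnn]
      by_cases h : mm = m <;> simp [h, Nat.succ_inj]

end scalarAux

section algAux

variable {K L}

local notation "ι" => UniversalEnvelopingAlgebra.ι K

lemma pow_sum_expand {A : Type*} [Ring A] {n' : ℕ} (a : Fin n' → A)
    (S : Finset (Fin n')) :
    ∀ n : ℕ, (∑ i ∈ S, a i) ^ n =
      ∑ f ∈ Fintype.piFinset (fun _ : Fin n => S), (List.ofFn fun j => a (f j)).prod := by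
  intro n
  induction n with
  | zero =>
    have huniv : Fintype.piFinset (fun _ : Fin 0 => S) = Finset.univ := by
      ext f; simp [Fintype.mem_piFinset]
    rw [huniv]
    simp
  | succ n ih =>
    rw [pow_succ', ih, Finset.sum_mul_sum, ← Finset.sum_product']
    refine Finset.sum_nbij' (fun p => Fin.cons p.1 p.2) (fun f => (f 0, fun j => f j.succ))
      ?_ ?_ ?_ ?_ ?_
    · rintro ⟨i, f⟩ hp
      simp only [Finset.mem_product, Fintype.mem_piFinset] at hp
      simp only [Fintype.mem_piFinset]
      intro j
      refine Fin.cases ?_ ?_ j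
      · simpa using hp.1
      · intro j'; simpa using hp.2 j'
    · intro f hf
      simp only [Fintype.mem_piFinset] at hf
      simp only [Finset.mem_product, Fintype.mem_piFinset]
      exact ⟨hf 0, fun j => hf j.succ⟩
    · rintro ⟨i, f⟩ _
      simp [Fin.cons_zero, Fin.cons_succ]
    · intro f _
      funext j
      refine Fin.cases ?_ ?_ j <;> simp [Fin.cons_zero, Fin.cons_succ]
    · rintro ⟨i, f⟩ _
      rw [List.ofFn_succ, List.prod_cons]
      simp [Fin.cons_zero, Fin.cons_succ]

lemma incl_excl {m : ℕ} (T : Finset (Fin m)) :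
    (∑ S : Finset (Fin m), if T ⊆ S then (-1 : K) ^ (m - S.card) else 0)
      = if T = Finset.univ then 1 else 0 := by
  classical
  rw [← Finset.sum_filter]
  rw [Finset.sum_nbij' (i := fun S => Sᶜ) (j := fun R => Rᶜ)
    (s := Finset.univ.filter (fun S => T ⊆ S)) (t := Tᶜ.powerset)
    (f := fun S => (-1 : K) ^ (m - S.card)) (g := fun R => (-1 : K) ^ R.card)
    (by intro S hS
        simp only [Finset.mem_filter] at hS
        simpa [Finset.mem_powerset] using Finset.compl_subset_compl.2 hS.2)
    (by intro R hR
        simp only [Finset.mem_powerset] at hR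
        simp only [Finset.mem_filter, Finset.mem_univ, true_and]
        simpa using Finset.compl_subset_compl.2 hR)
    (by intro S _; simp)
    (by intro R _; simp)
    (by intro S _
        show ((-1 : K) ^ (m - S.card)) = (-1 : K) ^ (Sᶜ.card)
        congr 1
        rw [Finset.card_compl]
        simp)]
  have := Finset.sum_powerset_neg_one_pow_card (x := Tᶜ)
  have hcast : (∑ R ∈ Tᶜ.powerset, (-1 : K) ^ R.card)
      = ((∑ R ∈ Tᶜ.powerset, (-1 : ℤ) ^ R.card : ℤ) : K) := by
    push_cast; rfl
  rw [hcast, this]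
  simp only [Finset.compl_eq_empty_iff, apply_ite (fun z : ℤ => (z : K)), Int.cast_one,
    Int.cast_zero]

lemma polarization (m : ℕ) (x : Fin m → L) :
    (∑ S : Finset (Fin m), ((-1 : K) ^ (m - S.card)) • (ι (∑ i ∈ S, x i)) ^ m)
      = ∑ σ : Equiv.Perm (Fin m), (List.ofFn fun i => ι (x (σ i))).prod := by
  classical
  have step1 : ∀ S : Finset (Fin m), (ι (∑ i ∈ S, x i)) ^ m =
      ∑ f ∈ Fintype.piFinset (fun _ : Fin m => S), (List.ofFn fun j => ι (x (f j))).prod := by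
    intro S
    rw [map_sum]
    exact pow_sum_expand _ S m
  calc (∑ S : Finset (Fin m), ((-1 : K) ^ (m - S.card)) • (ι (∑ i ∈ S, x i)) ^ m)
      = ∑ S : Finset (Fin m), ∑ f : Fin m → Fin m,
          (if ∀ j, f j ∈ S then ((-1 : K) ^ (m - S.card)) else 0) •
            (List.ofFn fun j => ι (x (f j))).prod := by
        refine Finset.sum_congr rfl fun S _ => ?_
        rw [step1 S, Finset.smul_sum]
        have hpi : Fintype.piFinset (fun _ : Fin m => S) =
            Finset.univ.filter (fun f : Fin m → Fin m => ∀ j, f j ∈ S) := by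
          ext f; simp [Fintype.mem_piFinset]
        rw [hpi, Finset.sum_filter]
        refine Finset.sum_congr rfl fun f _ => ?_
        split <;> simp
    _ = ∑ f : Fin m → Fin m,
          (∑ S : Finset (Fin m), if ∀ j, f j ∈ S then ((-1 : K) ^ (m - S.card)) else 0) •
            (List.ofFn fun j => ι (x (f j))).prod := by
        rw [Finset.sum_comm]
        refine Finset.sum_congr rfl fun f _ => ?_
        rw [Finset.sum_smul]
    _ = ∑ f : Fin m → Fin m,
          (if Function.Surjective f then (1 : K) else 0) •
            (List.ofFn fun j => ι (x (f j))).prod := by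
        refine Finset.sum_congr rfl fun f _ => ?_
        congr 1
        have hiff : ∀ S : Finset (Fin m),
            (∀ j, f j ∈ S) ↔ Finset.image f Finset.univ ⊆ S := by
          intro S
          simp [Finset.image_subset_iff]
        rw [Finset.sum_congr rfl (fun S _ => by rw [if_congr (hiff S) rfl rfl])]
        rw [incl_excl]
        have himg : Finset.image f Finset.univ = Finset.univ ↔ Function.Surjective f := by
          constructor
          · intro h b
            have : b ∈ Finset.image f Finset.univ := by rw [h]; exact Finset.mem_univ b
            rcases Finset.mem_image.1 this with ⟨a, _, ha⟩
            exact ⟨a, ha⟩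
          · intro h
            refine Finset.eq_univ_of_forall fun b => ?_
            rcases h b with ⟨a, ha⟩
            exact Finset.mem_image.2 ⟨a, Finset.mem_univ a, ha⟩
        rw [if_congr himg rfl rfl]
    _ = ∑ f ∈ Finset.univ.filter (fun f : Fin m → Fin m => Function.Surjective f),
          (List.ofFn fun j => ι (x (f j))).prod := by
        rw [Finset.sum_filter]
        refine Finset.sum_congr rfl fun f _ => ?_
        split <;> simp
    _ = ∑ σ : Equiv.Perm (Fin m), (List.ofFn fun i => ι (x (σ i))).prod := by
        refine (Finset.sum_bij (fun (σ : Equiv.Perm (Fin m)) _ => (σ : Fin m → Fin m))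
          ?_ ?_ ?_ ?_).symm
        · intro σ _
          simp only [Finset.mem_filter, Finset.mem_univ, true_and]
          exact σ.surjective
        · intro σ _ τ _ h
          exact Equiv.coe_inj.1 h
        · intro f hf
          simp only [Finset.mem_filter, Finset.mem_univ, true_and] at hf
          exact ⟨Equiv.ofBijective f hf.bijective_of_finite, Finset.mem_univ _, rfl⟩
        · intro σ _
          rfl

lemma delta_pow (Δ : UE →ₐ[K] UE ⊗[K] UE)
    (hΔ : ∀ x : L, Δ (ι x) = (ι x : UE) ⊗ₜ[K] 1 + 1 ⊗ₜ[K] (ι x : UE))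
    (y : L) (n : ℕ) :
    Δ ((ι y : UE) ^ n) = ∑ j ∈ Finset.range (n + 1),
      (n.choose j) • (((ι y : UE) ^ j) ⊗ₜ[K] ((ι y : UE) ^ (n - j))) := by
  rw [map_pow, hΔ y]
  have hc : Commute ((ι y : UE) ⊗ₜ[K] (1 : UE)) ((1 : UE) ⊗ₜ[K] (ι y : UE)) := by
    show _ * _ = _ * _
    rw [Algebra.TensorProduct.tmul_mul_tmul, Algebra.TensorProduct.tmul_mul_tmul,
      mul_one, one_mul]
  rw [hc.add_pow]
  refine Finset.sum_congr rfl fun j _ => ?_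
  rw [Algebra.TensorProduct.tmul_pow, Algebra.TensorProduct.tmul_pow, one_pow, one_pow,
    Algebra.TensorProduct.tmul_mul_tmul, mul_one, one_mul, ← nsmul_eq_mul']


lemma J_pow (ε : UE →ₐ[K] K) (hε : ∀ x : L, ε (ι x) = 0) (y : L) (n : ℕ) :
    ((LinearMap.id : UE →ₗ[K] UE) - Algebra.linearMap K UE ∘ₗ ε.toLinearMap) ((ι y : UE) ^ n)
      = if n = 0 then 0 else (ι y : UE) ^ n := by
  have hε' : ε ((ι y : UE) ^ n) = if n = 0 then 1 else 0 := by
    rw [map_pow, hε y]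
    cases n with
    | zero => simp
    | succ n => simp [zero_pow]
  simp only [LinearMap.sub_apply, LinearMap.id_apply, LinearMap.comp_apply,
    AlgHom.toLinearMap_apply, Algebra.linearMap_apply, hε']
  split
  · next h => subst h; simp
  · simp

lemma convPowJ_pow (Δ : UE →ₐ[K] UE ⊗[K] UE)
    (hΔ : ∀ x : L, Δ (ι x) = (ι x : UE) ⊗ₜ[K] 1 + 1 ⊗ₜ[K] (ι x : UE))
    (ε : UE →ₐ[K] K) (hε : ∀ x : L, ε (ι x) = 0) (y : L) (k : ℕ) :
    ∀ n : ℕ, convPowJ K L Δ ε k ((ι y : UE) ^ n) = ((eulC k n : ℚ) : K) • (ι y : UE) ^ n := by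
  induction k with
  | zero =>
    intro n
    show (Algebra.linearMap K UE ∘ₗ ε.toLinearMap) _ = _
    rw [LinearMap.comp_apply, AlgHom.toLinearMap_apply, map_pow, hε y]
    cases n with
    | zero => rw [eulC_zero]; simp
    | succ n => rw [eulC_zero]; simp [zero_pow]
  | succ k ih =>
    intro n
    show (LinearMap.mul' K UE ∘ₗ
      TensorProduct.map (LinearMap.id - Algebra.linearMap K UE ∘ₗ ε.toLinearMap)
        (convPowJ K L Δ ε k) ∘ₗ Δ.toLinearMap) _ = _
    rw [LinearMap.comp_apply, LinearMap.comp_apply, AlgHom.toLinearMap_apply,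
      delta_pow Δ hΔ y n, map_sum, map_sum]
    have hterm : ∀ j ∈ Finset.range (n + 1),
        LinearMap.mul' K UE ((TensorProduct.map
          (LinearMap.id - Algebra.linearMap K UE ∘ₗ ε.toLinearMap) (convPowJ K L Δ ε k))
          ((n.choose j) • (((ι y : UE) ^ j) ⊗ₜ[K] ((ι y : UE) ^ (n - j)))))
        = (((if j = 0 then 0 else (n.choose j : ℚ) * eulC k (n - j)) : ℚ) : K) •
            (ι y : UE) ^ n := by
      intro j hj
      have hjn : j ≤ n := by
        simp only [Finset.mem_range] at hj; omega
      rw [map_nsmul, map_nsmul, TensorProduct.map_tmul, J_pow ε hε, ih (n - j)]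
      by_cases hjz : j = 0
      · subst hjz
        simp
      · rw [if_neg hjz, if_neg hjz, TensorProduct.tmul_smul, map_smul,
          LinearMap.mul'_apply, ← pow_add, Nat.add_sub_cancel' hjn]
        rw [← Nat.cast_smul_eq_nsmul K, smul_smul]
        congr 1
        push_cast
        ring
    rw [Finset.sum_congr rfl hterm, ← Finset.sum_smul]
    congr 1
    rw [eulC_succ, Rat.cast_sum]

lemma p_pow (Lser : PowerSeries ℚ)
    (hL : ∀ n : ℕ, PowerSeries.coeff n Lser =
      if n = 0 then 0 else (-1 : ℚ) ^ (n - 1) / (n : ℚ))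
    (lam : ℕ → ℕ → ℚ)
    (hlam : ∀ m n : ℕ, lam m n = PowerSeries.coeff n ((m.factorial : ℚ)⁻¹ • Lser ^ m))
    (Δ : UE →ₐ[K] UE ⊗[K] UE)
    (hΔ : ∀ x : L, Δ (ι x) = (ι x : UE) ⊗ₜ[K] 1 + 1 ⊗ₜ[K] (ι x : UE))
    (ε : UE →ₐ[K] K) (hε : ∀ x : L, ε (ι x) = 0)
    (p : ℕ → (UE →ₗ[K] UE))
    (hp : ∀ (m : ℕ) (a : UE), ∃ N : ℕ, ∀ n ≥ N,
      p m a = ∑ k ∈ Finset.range n, ((lam m k : ℚ) : K) • convPowJ K L Δ ε k a)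
    (m' : ℕ) (y : L) (n : ℕ) :
    p m' ((ι y : UE) ^ n) = if m' = n then (ι y : UE) ^ n else 0 := by
  obtain ⟨N, hN⟩ := hp m' ((ι y : UE) ^ n)
  have h := hN (max N (n + 1)) (le_max_left _ _)
  rw [h, Finset.sum_congr rfl fun k _ => by
    rw [convPowJ_pow Δ hΔ ε hε y k n, smul_smul, ← Rat.cast_mul]]
  rw [← Finset.sum_smul, ← Rat.cast_sum,
    keySum Lser lam hL hlam n m' (max N (n + 1)) (lt_of_lt_of_le (Nat.lt_succ_self n)
      (le_max_right _ _))]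
  split <;> simp

end algAux

/- The Eulerian idempotents `p_m` of `U(g)` correspond, under the symmetrization
isomorphism `Sym : S(g) → U(g)`, to the projections onto the symmetric components
`S^m(g)`: on symmetrized products of `m` elements of `g` (which span the image of `S^m(g)`),
`p_{m'}` acts as the identity when `m' = m` and as `0` otherwise. -/
theorem stmt4
    (Δ : UE →ₐ[K] UE ⊗[K] UE)
    (hΔ : ∀ x : L, Δ (UniversalEnvelopingAlgebra.ι K x) =
      UniversalEnvelopingAlgebra.ι K x ⊗ₜ[K] 1 + 1 ⊗ₜ[K] UniversalEnvelopingAlgebra.ι K x)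
    (ε : UE →ₐ[K] K)
    (hε : ∀ x : L, ε (UniversalEnvelopingAlgebra.ι K x) = 0)
    (Lser : PowerSeries ℚ)
    (hL : ∀ n : ℕ, PowerSeries.coeff n Lser =
      if n = 0 then 0 else (-1 : ℚ) ^ (n - 1) / (n : ℚ))
    (lam : ℕ → ℕ → ℚ)
    (hlam : ∀ m n : ℕ, lam m n = PowerSeries.coeff n ((m.factorial : ℚ)⁻¹ • Lser ^ m))
    (p : ℕ → (UE →ₗ[K] UE))
    (hp : ∀ (m : ℕ) (a : UE), ∃ N : ℕ, ∀ n ≥ N,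
      p m a = ∑ k ∈ Finset.range n, ((lam m k : ℚ) : K) • convPowJ K L Δ ε k a) :
    ∀ (m m' : ℕ) (x : Fin m → L),
      p m' (symProd K L m x) = if m' = m then symProd K L m x else 0 := by
  intro m m' x
  rw [show symProd K L m x = ((m.factorial : K))⁻¹ • ∑ σ : Equiv.Perm (Fin m),
      (List.ofFn fun i => UniversalEnvelopingAlgebra.ι K (x (σ i))).prod from rfl,
    map_smul, ← polarization, map_sum]
  have hterm : ∀ S : Finset (Fin m),
      p m' (((-1 : K) ^ (m - S.card)) • (UniversalEnvelopingAlgebra.ι K (∑ i ∈ S, x i)) ^ m)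
        = ((-1 : K) ^ (m - S.card)) •
            (if m' = m then (UniversalEnvelopingAlgebra.ι K (∑ i ∈ S, x i)) ^ m else 0) := by
    intro S
    rw [map_smul, p_pow Lser hL lam hlam Δ hΔ ε hε p hp m' _ m]
  rw [Finset.sum_congr rfl fun S _ => hterm S]
  by_cases h : m' = m
  · simp only [if_pos h]
  · simp [if_neg h]

end
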